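/- For the type-II minimal surface equation -f''g'³ + e^{-2g}(f'²(g''-g'²) - f''g') + e^{2g}(g''+g'²) = 0: if f is constant, then the equation holds if and only if g'' + g'² = 0; hence the solutions are g constant or g(t) = log|t+λ| + μ. -/

import Mathlib

/-- If the derivative vanishes on a convex set where the function is differentiable,
the function takes equal values at any two points of the set. -/
lemma const_of_deriv_zero_on {J : Set ℝ} (hJconn : Convex ℝ J) {φ : ℝ → ℝ}
    (hφ : ∀ t ∈ J, DifferentiableAt ℝ φ t) (hφ' : ∀ t ∈ J, deriv φ t = 0)
    {x y : ℝ} (hx : x ∈ J) (hy : y ∈ J) : φ x = φ y := by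
  have hle := hJconn.norm_image_sub_le_of_norm_deriv_le (C := 0) hφ
    (fun t ht => by simp [hφ' t ht]) hx hy
  have h0 : ‖φ y - φ x‖ ≤ 0 := by simpa using hle
  have h1 : φ y - φ x = 0 := norm_eq_zero.1 (le_antisymm h0 (norm_nonneg _))
  linarith

theorem typeII_minimal_f_constant (J : Set ℝ) (hJopen : IsOpen J)
    (hJconn : Convex ℝ J) (hJne : J.Nonempty) (k : ℝ) (g : ℝ → ℝ)
    (hg : ∀ t ∈ J, DifferentiableAt ℝ g t)
    (hg' : ∀ t ∈ J, DifferentiableAt ℝ (deriv g) t) :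
    ((∀ t ∈ J,
        -(deriv (deriv (fun _ : ℝ => k)) t) * (deriv g t) ^ 3
          + Real.exp (-(2 * g t)) *
            ((deriv (fun _ : ℝ => k) t) ^ 2 * (deriv (deriv g) t - (deriv g t) ^ 2)
              - deriv (deriv (fun _ : ℝ => k)) t * deriv g t)
          + Real.exp (2 * g t) * (deriv (deriv g) t + (deriv g t) ^ 2) = 0)
      ↔ (∀ t ∈ J, deriv (deriv g) t + (deriv g t) ^ 2 = 0)) ∧
    ((∀ t ∈ J, deriv (deriv g) t + (deriv g t) ^ 2 = 0) →
      (∃ z0 : ℝ, ∀ t ∈ J, g t = z0) ∨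
      (∃ lam mu : ℝ, ∀ t ∈ J, g t = Real.log |t + lam| + mu)) := by
  have hk : deriv (fun _ : ℝ => k) = fun _ : ℝ => (0 : ℝ) := by
    funext t; exact deriv_const t k
  constructor
  · constructor
    · intro h t ht
      have := h t ht
      rw [hk] at this
      simp only [deriv_const'] at this
      have hpos := Real.exp_pos (2 * g t)
      have : Real.exp (2 * g t) * (deriv (deriv g) t + (deriv g t) ^ 2) = 0 := by
        linarith
      exact (mul_eq_zero.1 this).resolve_left (ne_of_gt hpos)
    · intro h t ht
      rw [hk]
      simp [h t ht]
  · intro h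
    -- Let H = exp ∘ g. Then H'' = 0 on J, so H is affine on J.
    set H : ℝ → ℝ := fun t => Real.exp (g t) with hH
    have hHd : ∀ t ∈ J, DifferentiableAt ℝ H t := fun t ht =>
      (Real.differentiable_exp _).comp t (hg t ht)
    have hHderiv : ∀ t ∈ J, deriv H t = Real.exp (g t) * deriv g t := by
      intro t ht
      have := ((hg t ht).hasDerivAt.exp)
      exact this.deriv
    -- deriv H is differentiable on J with derivative 0
    have hH'd : ∀ t ∈ J, DifferentiableAt ℝ (deriv H) t := by
      intro t ht
      have hcongr : Set.EqOn (deriv H) (fun s => Real.exp (g s) * deriv g s) J :=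
        fun s hs => hHderiv s hs
      have : DifferentiableAt ℝ (fun s => Real.exp (g s) * deriv g s) t :=
        (((Real.differentiable_exp _).comp t (hg t ht))).mul (hg' t ht)
      exact this.congr_of_eventuallyEq
        (Filter.eventuallyEq_of_mem (hJopen.mem_nhds ht) fun s hs => (hHderiv s hs))
    have hH'' : ∀ t ∈ J, deriv (deriv H) t = 0 := by
      intro t ht
      have hcongr : deriv H =ᶠ[nhds t] (fun s => Real.exp (g s) * deriv g s) :=
        Filter.eventuallyEq_of_mem (hJopen.mem_nhds ht) fun s hs => (hHderiv s hs)
      rw [hcongr.deriv_eq]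
      have h1 : HasDerivAt (fun s => Real.exp (g s)) (Real.exp (g t) * deriv g t) t :=
        (hg t ht).hasDerivAt.exp
      have h2 : HasDerivAt (fun s => Real.exp (g s) * deriv g s)
          (Real.exp (g t) * deriv g t * deriv g t + Real.exp (g t) * deriv (deriv g) t) t :=
        h1.mul (hg' t ht).hasDerivAt
      rw [h2.deriv]
      have := h t ht
      nlinarith [Real.exp_pos (g t)]
    obtain ⟨t0, ht0⟩ := hJne
    -- deriv H is constant a on J
    set a := deriv H t0 with ha
    have hHa : ∀ t ∈ J, deriv H t = a := fun t ht =>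
      const_of_deriv_zero_on hJconn hH'd hH'' ht ht0
    -- H t - a * t is constant on J
    set b := H t0 - a * t0 with hb
    have hHab : ∀ t ∈ J, H t = a * t + b := by
      intro t ht
      have : (fun s => H s - a * s) t = (fun s => H s - a * s) t0 :=
        const_of_deriv_zero_on hJconn
          (fun s hs => (hHd s hs).sub ((differentiable_id.const_mul a) s))
          (fun s hs => by
            rw [deriv_sub (hHd s hs) ((differentiable_id.const_mul a) s)]
            have hda : deriv (fun y : ℝ => a * id y) s = a := by
              simpa using ((hasDerivAt_id s).const_mul a).deriv
            rw [hda, hHa s hs, sub_self])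
          ht ht0
      simp only at this
      rw [hb]; linarith
    have hHpos : ∀ t ∈ J, 0 < a * t + b := by
      intro t ht; rw [← hHab t ht]; exact Real.exp_pos _
    have hglog : ∀ t ∈ J, g t = Real.log (a * t + b) := by
      intro t ht
      rw [← hHab t ht, hH]; simp [Real.log_exp]
    by_cases hA : a = 0
    · left
      refine ⟨Real.log b, fun t ht => ?_⟩
      rw [hglog t ht, hA]; ring_nf
    · right
      refine ⟨b / a, Real.log |a|, fun t ht => ?_⟩
      have hne : t + b / a ≠ 0 := by
        intro hzero
        have : a * t + b = a * (t + b / a) := by field_simp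
        rw [hzero, mul_zero] at this
        exact absurd this (ne_of_gt (hHpos t ht))
      have heq : a * t + b = a * (t + b / a) := by field_simp
      rw [hglog t ht, heq, ← Real.log_abs, abs_mul,
        Real.log_mul (abs_ne_zero.2 hA) (abs_ne_zero.2 hne), add_comm]
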